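/- Let p be a prime, e a positive integer, and a,b,c,d elements of Z/p^e. The number of pairs (x,y) in (Z/p^e)^2 satisfying a*x + b*y ≡ 0 and c*x + d*y ≡ 0 (mod p^e) equals gcd(a*d - b*c, p^e * gcd(a,b,c,d,p^e)). -/

import Mathlib

open scoped Classical

def Primitive {m n : ℕ} (u : Fin n → ZMod m) : Prop :=
  Nat.gcd (Finset.univ.gcd fun i => (u i).val) m = 1

def assoc {m n : ℕ} (u v : Fin n → ZMod m) : Prop :=
  ∃ lam : (ZMod m)ˣ, v = fun i => (lam : ZMod m) * u i

def projSetoid (m n : ℕ) : Setoid {u : Fin n → ZMod m // Primitive u} where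
  r u v := assoc u.1 v.1
  iseqv := by
    refine ⟨fun u => ⟨1, by simp⟩, ?_, ?_⟩
    · rintro u v ⟨l, h⟩
      refine ⟨l⁻¹, ?_⟩
      funext i
      simp [h, ← mul_assoc]
    · rintro u v w ⟨l, hl⟩ ⟨k, hk⟩
      refine ⟨k * l, ?_⟩
      funext i
      simp [hk, hl, mul_assoc]

abbrev ProjPt (m n : ℕ) := Quotient (projSetoid m n)

noncomputable def theta (n m : ℕ) : ℕ := Nat.card (ProjPt m n)

def orthoPt (m n : ℕ) (U W : ProjPt m n) : Prop :=
  ∀ (u w : {x : Fin n → ZMod m // Primitive x}),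
    Quotient.mk (projSetoid m n) u = U → Quotient.mk (projSetoid m n) w = W →
      ∑ i, u.1 i * w.1 i = 0

noncomputable def Bmat (m n : ℕ) : Matrix (ProjPt m n) (ProjPt m n) ℚ :=
  fun U V => (Nat.card {W : ProjPt m n // orthoPt m n U W ∧ orthoPt m n V W} : ℚ)

noncomputable def nuVal (p e : ℕ) (x : ZMod (p^e)) : ℕ := if x = 0 then e else padicValNat p x.val

noncomputable def nuXi (p e : ℕ) {n : ℕ} (u v : Fin n → ZMod (p^e)) : ℕ :=
  sInf {k | ∃ i j : Fin n, k = nuVal p e (u i * v j - u j * v i)}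

noncomputable def red (p e : ℕ) {n : ℕ} (u : Fin n → ZMod (p^e)) : Fin n → ZMod (p^(e-1)) :=
  fun i => ZMod.castHom (pow_dvd_pow p (Nat.sub_le e 1)) (ZMod (p^(e-1))) (u i)

noncomputable def eigMult {ι : Type*} [Fintype ι] (B : Matrix ι ι ℚ) (lam : ℚ) : ℕ :=
  Module.finrank ℚ (LinearMap.ker (B.mulVecLin - lam • (LinearMap.id : (ι → ℚ) →ₗ[ℚ] (ι → ℚ))))


lemma count_lin (m : ℕ) (hm : m ≠ 0) (α : ZMod m) :
    Nat.card {x : ZMod m // α * x = 0} = Nat.gcd α.val m := by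
  haveI : NeZero m := ⟨hm⟩
  let f : ZMod m →+ ZMod m := AddMonoidHom.mulLeft α
  have hker : Nat.card {x : ZMod m // α * x = 0} = Nat.card f.ker := by
    apply Nat.card_congr
    exact Equiv.subtypeEquivRight (fun x => by simp [f, AddMonoidHom.mem_ker])
  have hrange : f.range = AddSubgroup.zmultiples α := by
    ext y
    constructor
    · rintro ⟨x, rfl⟩
      exact ⟨x.val, by simp [f, mul_comm, nsmul_eq_mul, ZMod.natCast_rightInverse x]⟩
    · rintro ⟨k, rfl⟩
      exact ⟨(k : ZMod m), by simp [f, zsmul_eq_mul, mul_comm]⟩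
  have hcard_range : Nat.card f.range = m / Nat.gcd m α.val := by
    rw [hrange, Nat.card_zmultiples]
    conv_lhs => rw [show α = ((α.val : ℕ) : ZMod m) from (ZMod.natCast_rightInverse α).symm]
    exact ZMod.addOrderOf_coe _ hm
  have h1 : Nat.card f.ker * f.ker.index = m := by
    rw [AddSubgroup.card_mul_index, Nat.card_zmod]
  have h2 : f.ker.index = Nat.card f.range := by
    rw [AddSubgroup.index, Nat.card_congr (QuotientAddGroup.quotientKerEquivRange f).toEquiv]
  rw [hker]
  rw [h2, hcard_range] at h1
  have hg : m.gcd α.val ∣ m := Nat.gcd_dvd_left _ _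
  have hgpos : 0 < m.gcd α.val := Nat.gcd_pos_of_pos_left _ (Nat.pos_of_ne_zero hm)
  have hdiv : m / m.gcd α.val ∣ m := Nat.div_dvd_of_dvd hg
  have hdivpos : 0 < m / m.gcd α.val :=
    Nat.div_pos (Nat.le_of_dvd (Nat.pos_of_ne_zero hm) hg) hgpos
  rw [Nat.gcd_comm]
  have hmc : m.gcd α.val * (m / m.gcd α.val) = m := Nat.mul_div_cancel' hg
  exact Nat.eq_of_mul_eq_mul_right hdivpos (h1.trans hmc.symm)

lemma gcd_pow_prime {p : ℕ} (hp : p.Prime) {n : ℕ} (hn : n ≠ 0) (k : ℕ) :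
    Nat.gcd n (p^k) = p ^ min (n.factorization p) k := by
  obtain ⟨j, hjk, hj⟩ := (Nat.dvd_prime_pow hp).1 (Nat.gcd_dvd_right n (p^k))
  have hfac : (Nat.gcd n (p^k)).factorization p = min (n.factorization p) k := by
    rw [Nat.factorization_gcd hn (pow_ne_zero _ hp.pos.ne')]
    simp [hp.factorization_pow, Finsupp.inf_apply]
  rw [hj] at hfac ⊢
  rw [hp.factorization_pow] at hfac
  simp at hfac
  rw [hfac]

lemma diag_gcd (p : ℕ) (hp : p.Prime) (e A D : ℕ) :
    Nat.gcd (A*D) (Nat.gcd (p^e*A) (Nat.gcd (p^e*D) (p^e*p^e)))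
      = Nat.gcd A (p^e) * Nat.gcd D (p^e) := by
  rcases eq_or_ne A 0 with rfl | hA
  · simp [Nat.gcd_mul_left]
  rcases eq_or_ne D 0 with rfl | hD
  · rw [Nat.mul_zero, Nat.mul_zero, Nat.gcd_zero_left, Nat.gcd_zero_left, Nat.gcd_mul_left,
      Nat.gcd_zero_left]
    ring
  have h1 : Nat.gcd (p^e*D) (p^e*p^e) = p^e * Nat.gcd D (p^e) := Nat.gcd_mul_left _ _ _
  rw [h1]
  have h2 : Nat.gcd (p^e*A) (p^e * Nat.gcd D (p^e)) = p^e * Nat.gcd A (Nat.gcd D (p^e)) :=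
    Nat.gcd_mul_left _ _ _
  rw [h2]
  rw [gcd_pow_prime hp hD e, gcd_pow_prime hp hA, gcd_pow_prime hp hA]
  rw [show p^e * p ^ min (A.factorization p) (min (D.factorization p) e)
      = p ^ (e + min (A.factorization p) (min (D.factorization p) e)) by rw [pow_add]]
  have hAD : A*D ≠ 0 := Nat.mul_ne_zero hA hD
  rw [gcd_pow_prime hp hAD]
  rw [Nat.factorization_mul hA hD]
  simp only [Finsupp.add_apply]
  rw [← pow_add]
  congr 1
  omega
lemma dvd_intGcd_iff (k : ℕ) (x y : ℤ) :
    k ∣ Int.gcd x y ↔ (k:ℤ) ∣ x ∧ (k:ℤ) ∣ y := by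
  constructor
  · intro h
    have h' : (k:ℤ) ∣ (Int.gcd x y : ℤ) := Int.natCast_dvd_natCast.2 h
    exact ⟨h'.trans (Int.gcd_dvd_left x y), h'.trans (Int.gcd_dvd_right x y)⟩
  · rintro ⟨h1, h2⟩
    exact Int.natCast_dvd_natCast.1 (Int.dvd_coe_gcd h1 h2)

def Gz (m : ℕ) (A B C D : ℤ) : ℕ :=
  Int.gcd (A*D - B*C) (Int.gcd ((m:ℤ)*A) (Int.gcd ((m:ℤ)*B) (Int.gcd ((m:ℤ)*C)
    ((Int.gcd ((m:ℤ)*D) ((m:ℤ)*(m:ℤ)) : ℕ) : ℤ))))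

lemma dvd_Gz (m : ℕ) (A B C D : ℤ) (k : ℕ) :
    k ∣ Gz m A B C D ↔ ((k:ℤ) ∣ A*D - B*C ∧ (k:ℤ) ∣ (m:ℤ)*A ∧ (k:ℤ) ∣ (m:ℤ)*B ∧
      (k:ℤ) ∣ (m:ℤ)*C ∧ (k:ℤ) ∣ (m:ℤ)*D ∧ (k:ℤ) ∣ (m:ℤ)*(m:ℤ)) := by
  simp [Gz, dvd_intGcd_iff, Int.natCast_dvd_natCast, and_assoc]

lemma Gz_eq_of_iff {m A B C D A' B' C' D'} 
    (h : ∀ k : ℕ, k ∣ Gz m A B C D ↔ k ∣ Gz m A' B' C' D') :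
    Gz m A B C D = Gz m A' B' C' D' :=
  Nat.dvd_antisymm ((h _).1 dvd_rfl) ((h _).2 dvd_rfl)

lemma Gz_rowswap (m : ℕ) (A B C D : ℤ) : Gz m C D A B = Gz m A B C D := by
  refine Gz_eq_of_iff fun k => ?_
  rw [dvd_Gz, dvd_Gz]
  constructor
  · rintro ⟨h1, h2, h3, h4, h5, h6⟩
    exact ⟨by rw [show A*D - B*C = -(C*B - D*A) by ring]; exact dvd_neg.2 h1, h4, h5, h2, h3, h6⟩
  · rintro ⟨h1, h2, h3, h4, h5, h6⟩
    exact ⟨by rw [show C*B - D*A = -(A*D - B*C) by ring]; exact dvd_neg.2 h1, h4, h5, h2, h3, h6⟩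

lemma Gz_colswap (m : ℕ) (A B C D : ℤ) : Gz m B A D C = Gz m A B C D := by
  refine Gz_eq_of_iff fun k => ?_
  rw [dvd_Gz, dvd_Gz]
  constructor
  · rintro ⟨h1, h2, h3, h4, h5, h6⟩
    exact ⟨by rw [show A*D - B*C = -(B*C - A*D) by ring]; exact dvd_neg.2 h1, h3, h2, h5, h4, h6⟩
  · rintro ⟨h1, h2, h3, h4, h5, h6⟩
    exact ⟨by rw [show B*C - A*D = -(A*D - B*C) by ring]; exact dvd_neg.2 h1, h3, h2, h5, h4, h6⟩

lemma Gz_rowop (m : ℕ) (A B C D R : ℤ) : Gz m A B (C - R*A) (D - R*B) = Gz m A B C D := by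
  refine Gz_eq_of_iff fun k => ?_
  rw [dvd_Gz, dvd_Gz]
  constructor
  · rintro ⟨h1, h2, h3, h4, h5, h6⟩
    refine ⟨by rw [show A*D - B*C = A*(D - R*B) - B*(C - R*A) by ring]; exact h1, h2, h3, ?_, ?_, h6⟩
    · rw [show (m:ℤ)*C = (m:ℤ)*(C - R*A) + R*((m:ℤ)*A) by ring]
      exact dvd_add h4 (h2.mul_left R)
    · rw [show (m:ℤ)*D = (m:ℤ)*(D - R*B) + R*((m:ℤ)*B) by ring]
      exact dvd_add h5 (h3.mul_left R)
  · rintro ⟨h1, h2, h3, h4, h5, h6⟩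
    refine ⟨by rw [show A*(D - R*B) - B*(C - R*A) = A*D - B*C by ring]; exact h1, h2, h3, ?_, ?_, h6⟩
    · rw [show (m:ℤ)*(C - R*A) = (m:ℤ)*C - R*((m:ℤ)*A) by ring]
      exact dvd_sub h4 (h2.mul_left R)
    · rw [show (m:ℤ)*(D - R*B) = (m:ℤ)*D - R*((m:ℤ)*B) by ring]
      exact dvd_sub h5 (h3.mul_left R)

lemma Gz_colop (m : ℕ) (A B C D Q : ℤ) : Gz m A (B - Q*A) C (D - Q*C) = Gz m A B C D := by
  refine Gz_eq_of_iff fun k => ?_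
  rw [dvd_Gz, dvd_Gz]
  constructor
  · rintro ⟨h1, h2, h3, h4, h5, h6⟩
    refine ⟨by rw [show A*D - B*C = A*(D - Q*C) - (B - Q*A)*C by ring]; exact h1, h2, ?_, h4, ?_, h6⟩
    · rw [show (m:ℤ)*B = (m:ℤ)*(B - Q*A) + Q*((m:ℤ)*A) by ring]
      exact dvd_add h3 (h2.mul_left Q)
    · rw [show (m:ℤ)*D = (m:ℤ)*(D - Q*C) + Q*((m:ℤ)*C) by ring]
      exact dvd_add h5 (h4.mul_left Q)
  · rintro ⟨h1, h2, h3, h4, h5, h6⟩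
    refine ⟨by rw [show A*(D - Q*C) - (B - Q*A)*C = A*D - B*C by ring]; exact h1, h2, ?_, h4, ?_, h6⟩
    · rw [show (m:ℤ)*(B - Q*A) = (m:ℤ)*B - Q*((m:ℤ)*A) by ring]
      exact dvd_sub h3 (h2.mul_left Q)
    · rw [show (m:ℤ)*(D - Q*C) = (m:ℤ)*D - Q*((m:ℤ)*C) by ring]
      exact dvd_sub h5 (h4.mul_left Q)

lemma Gz_congr (m : ℕ) {A B C D A' B' C' D' : ℤ} (hA : (m:ℤ) ∣ A' - A) (hB : (m:ℤ) ∣ B' - B)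
    (hC : (m:ℤ) ∣ C' - C) (hD : (m:ℤ) ∣ D' - D) : Gz m A' B' C' D' = Gz m A B C D := by
  obtain ⟨s, hs⟩ := hA
  obtain ⟨t, ht⟩ := hB
  obtain ⟨u, hu⟩ := hC
  obtain ⟨w, hw⟩ := hD
  have hA' : A' = A + m*s := by linarith
  have hB' : B' = B + m*t := by linarith
  have hC' : C' = C + m*u := by linarith
  have hD' : D' = D + m*w := by linarith
  subst hA' hB' hC' hD'
  refine Gz_eq_of_iff fun k => ?_
  rw [dvd_Gz, dvd_Gz]
  constructor
  · rintro ⟨h1, h2, h3, h4, h5, h6⟩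
    refine ⟨?_, ?_, ?_, ?_, ?_, h6⟩
    · rw [show A*D - B*C
          = ((A + m*s)*(D + m*w) - (B + m*t)*(C + m*u)) + (-w)*((m:ℤ)*(A + m*s)) + (-s)*((m:ℤ)*(D + m*w))
            + u*((m:ℤ)*(B + m*t)) + t*((m:ℤ)*(C + m*u)) + (s*w - t*u)*((m:ℤ)*(m:ℤ)) by ring]
      exact dvd_add (dvd_add (dvd_add (dvd_add (dvd_add h1 (h2.mul_left (-w))) (h5.mul_left (-s)))
        (h3.mul_left u)) (h4.mul_left t)) (h6.mul_left (s*w - t*u))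
    · rw [show (m:ℤ)*A = (m:ℤ)*(A + m*s) + (-s)*((m:ℤ)*(m:ℤ)) by ring]
      exact dvd_add h2 (h6.mul_left (-s))
    · rw [show (m:ℤ)*B = (m:ℤ)*(B + m*t) + (-t)*((m:ℤ)*(m:ℤ)) by ring]
      exact dvd_add h3 (h6.mul_left (-t))
    · rw [show (m:ℤ)*C = (m:ℤ)*(C + m*u) + (-u)*((m:ℤ)*(m:ℤ)) by ring]
      exact dvd_add h4 (h6.mul_left (-u))
    · rw [show (m:ℤ)*D = (m:ℤ)*(D + m*w) + (-w)*((m:ℤ)*(m:ℤ)) by ring]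
      exact dvd_add h5 (h6.mul_left (-w))

  · rintro ⟨h1, h2, h3, h4, h5, h6⟩
    refine ⟨?_, ?_, ?_, ?_, ?_, h6⟩
    · rw [show (A + m*s)*(D + m*w) - (B + m*t)*(C + m*u)
          = (A*D - B*C) + w*((m:ℤ)*A) + s*((m:ℤ)*D) + (-u)*((m:ℤ)*B) + (-t)*((m:ℤ)*C)
            + (s*w - t*u)*((m:ℤ)*(m:ℤ)) by ring]
      exact dvd_add (dvd_add (dvd_add (dvd_add (dvd_add h1 (h2.mul_left w)) (h5.mul_left s))
        (h3.mul_left (-u))) (h4.mul_left (-t))) (h6.mul_left (s*w - t*u))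
    · rw [show (m:ℤ)*(A + m*s) = (m:ℤ)*A + s*((m:ℤ)*(m:ℤ)) by ring]
      exact dvd_add h2 (h6.mul_left s)
    · rw [show (m:ℤ)*(B + m*t) = (m:ℤ)*B + t*((m:ℤ)*(m:ℤ)) by ring]
      exact dvd_add h3 (h6.mul_left t)
    · rw [show (m:ℤ)*(C + m*u) = (m:ℤ)*C + u*((m:ℤ)*(m:ℤ)) by ring]
      exact dvd_add h4 (h6.mul_left u)
    · rw [show (m:ℤ)*(D + m*w) = (m:ℤ)*D + w*((m:ℤ)*(m:ℤ)) by ring]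
      exact dvd_add h5 (h6.mul_left w)
lemma val_int_congr {m : ℕ} [NeZero m] (x : ZMod m) (X : ℤ) (h : ((X : ℤ) : ZMod m) = x) :
    (m:ℤ) ∣ ((x.val : ℤ) - X) := by
  have h2 : (((x.val : ℤ) - X : ℤ) : ZMod m) = 0 := by
    push_cast
    rw [ZMod.natCast_rightInverse x, h]
    ring
  exact (ZMod.intCast_zmod_eq_zero_iff_dvd _ _).1 h2

lemma Gz_val (m A B C D : ℕ) :
    Gz m (A:ℤ) (B:ℤ) (C:ℤ) (D:ℤ)
      = Int.gcd ((A:ℤ)*(D:ℤ) - (B:ℤ)*(C:ℤ))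
          ((m:ℤ) * (Nat.gcd A (Nat.gcd B (Nat.gcd C (Nat.gcd D m))) : ℤ)) := by
  unfold Gz
  congr 1
  rw [show (m:ℤ)*(m:ℤ) = ((m*m : ℕ):ℤ) by push_cast; ring,
    show (m:ℤ)*(D:ℤ) = ((m*D : ℕ):ℤ) by push_cast; ring,
    show (m:ℤ)*(C:ℤ) = ((m*C : ℕ):ℤ) by push_cast; ring,
    show (m:ℤ)*(B:ℤ) = ((m*B : ℕ):ℤ) by push_cast; ring,
    show (m:ℤ)*(A:ℤ) = ((m*A : ℕ):ℤ) by push_cast; ring,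
    Int.gcd_natCast_natCast, Int.gcd_natCast_natCast, Int.gcd_natCast_natCast,
    Int.gcd_natCast_natCast]
  rw [Nat.gcd_mul_left, Nat.gcd_mul_left, Nat.gcd_mul_left, Nat.gcd_mul_left]
  push_cast
  ring

lemma Gz_diag (m A D : ℕ) :
    Gz m (A:ℤ) 0 0 (D:ℤ) = Nat.gcd (A*D) (Nat.gcd (m*A) (Nat.gcd (m*D) (m*m))) := by
  unfold Gz
  simp only [mul_zero, zero_mul, sub_zero, Int.gcd_zero_left, Int.natAbs_natCast]
  rw [show (m:ℤ)*(m:ℤ) = ((m*m : ℕ):ℤ) by push_cast; ring,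
    show (m:ℤ)*(D:ℤ) = ((m*D : ℕ):ℤ) by push_cast; ring,
    show (m:ℤ)*(A:ℤ) = ((m*A : ℕ):ℤ) by push_cast; ring,
    show (A:ℤ)*(D:ℤ) = ((A*D : ℕ):ℤ) by push_cast; ring,
    Int.gcd_natCast_natCast, Int.gcd_natCast_natCast, Int.gcd_natCast_natCast]
lemma zmod_decomp {p e : ℕ} (hp : p.Prime) (x : ZMod (p^e)) (hx : x ≠ 0) :
    ∃ u : (ZMod (p^e))ˣ, x = (p : ZMod (p^e))^(x.val.factorization p) * u := by
  haveI : NeZero (p^e) := ⟨pow_ne_zero e hp.pos.ne'⟩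
  have hv : x.val ≠ 0 := fun h => hx ((ZMod.val_eq_zero x).1 h)
  set α := x.val.factorization p with hα
  have hsplit : p ^ α * (x.val / p ^ α) = x.val := Nat.ordProj_mul_ordCompl_eq_self x.val p
  have hcop : Nat.Coprime (x.val / p ^ α) (p^e) :=
    ((Nat.coprime_ordCompl hp hv).symm).pow_right e
  obtain ⟨u, hu⟩ := (ZMod.isUnit_iff_coprime _ _).2 hcop
  refine ⟨u, ?_⟩
  have hxx : ((x.val : ℕ) : ZMod (p^e)) = x := ZMod.natCast_rightInverse x
  rw [← hxx, ← hsplit]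
  push_cast
  rw [hu]

lemma unit_pow_dvd {m : ℕ} (u v : (ZMod m)ˣ) {α β : ℕ} (h : α ≤ β) (c : ZMod m) :
    (c^α * (u : ZMod m)) ∣ (c^β * (v : ZMod m)) := by
  refine ⟨(u⁻¹ : (ZMod m)ˣ) * c^(β - α) * v, ?_⟩
  have huu : (u : ZMod m) * (u⁻¹ : (ZMod m)ˣ) = 1 := u.mul_inv
  have hpow : c^α * c^(β - α) = c^β := by rw [← pow_add]; congr 1; omega
  calc c^β * (v : ZMod m) = c^α * c^(β-α) * v := by rw [hpow]
    _ = c ^ α * ↑u * (↑u⁻¹ * c ^ (β - α) * ↑v) := by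
        linear_combination (-(c^α * c^(β-α) * (v : ZMod m))) * huu

lemma zmod_dvd_total {p e : ℕ} (hp : p.Prime) (x y : ZMod (p^e)) : x ∣ y ∨ y ∣ x := by
  haveI : NeZero (p^e) := ⟨pow_ne_zero e hp.pos.ne'⟩
  rcases eq_or_ne x 0 with rfl | hx
  · exact Or.inr (dvd_zero y)
  rcases eq_or_ne y 0 with rfl | hy
  · exact Or.inl (dvd_zero x)
  obtain ⟨u, hu⟩ := zmod_decomp hp x hx
  obtain ⟨v, hv⟩ := zmod_decomp hp y hy
  rcases le_total (x.val.factorization p) (y.val.factorization p) with h | h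
  · exact Or.inl (hu ▸ hv ▸ unit_pow_dvd u v h _)
  · exact Or.inr (hv ▸ hu ▸ unit_pow_dvd v u h _)

lemma lhs_rowswap {m : ℕ} (a b c d : ZMod m) :
    Nat.card {xy : ZMod m × ZMod m // a * xy.1 + b * xy.2 = 0 ∧ c * xy.1 + d * xy.2 = 0}
      = Nat.card {xy : ZMod m × ZMod m // c * xy.1 + d * xy.2 = 0 ∧ a * xy.1 + b * xy.2 = 0} :=
  Nat.card_congr (Equiv.subtypeEquivRight fun _ => and_comm)

lemma lhs_colswap {m : ℕ} (a b c d : ZMod m) :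
    Nat.card {xy : ZMod m × ZMod m // a * xy.1 + b * xy.2 = 0 ∧ c * xy.1 + d * xy.2 = 0}
      = Nat.card {xy : ZMod m × ZMod m // b * xy.1 + a * xy.2 = 0 ∧ d * xy.1 + c * xy.2 = 0} := by
  apply Nat.card_congr
  refine Equiv.subtypeEquiv (Equiv.prodComm _ _) fun z => ?_
  simp only [Equiv.prodComm_apply, Prod.fst_swap, Prod.snd_swap]
  constructor <;> rintro ⟨h1, h2⟩ <;>
    exact ⟨by linear_combination h1, by linear_combination h2⟩

lemma core_lemma (p e : ℕ) (hp : p.Prime) (a b c d : ZMod (p^e))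
    (hb : a ∣ b) (hc : a ∣ c) (hd : a ∣ d) :
    Nat.card {xy : ZMod (p^e) × ZMod (p^e) //
        a * xy.1 + b * xy.2 = 0 ∧ c * xy.1 + d * xy.2 = 0}
      = Gz (p^e) (a.val : ℤ) (b.val : ℤ) (c.val : ℤ) (d.val : ℤ) := by
  haveI : NeZero (p^e) := ⟨pow_ne_zero e hp.pos.ne'⟩
  obtain ⟨q, hq⟩ := hb
  obtain ⟨r, hr⟩ := hc
  subst hq
  subst hr
  -- LHS chain
  have L1 : Nat.card {xy : ZMod (p^e) × ZMod (p^e) //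
        a * xy.1 + a * q * xy.2 = 0 ∧ a * r * xy.1 + d * xy.2 = 0}
      = Nat.card {xy : ZMod (p^e) × ZMod (p^e) //
        a * xy.1 + a * q * xy.2 = 0 ∧ 0 * xy.1 + (d - r * (a * q)) * xy.2 = 0} := by
    apply Nat.card_congr
    refine Equiv.subtypeEquivRight fun z => ?_
    constructor <;> rintro ⟨h1, h2⟩ <;> refine ⟨h1, ?_⟩
    · linear_combination h2 - r * h1
    · linear_combination h2 + r * h1
  have L2 : Nat.card {xy : ZMod (p^e) × ZMod (p^e) //
        a * xy.1 + a * q * xy.2 = 0 ∧ 0 * xy.1 + (d - r * (a * q)) * xy.2 = 0}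
      = Nat.card {xy : ZMod (p^e) × ZMod (p^e) //
        a * xy.1 + 0 * xy.2 = 0 ∧ 0 * xy.1 + (d - r * (a * q)) * xy.2 = 0} := by
    apply Nat.card_congr
    refine Equiv.subtypeEquiv
      ⟨fun z : ZMod (p^e) × ZMod (p^e) => (z.1 + q * z.2, z.2),
       fun z : ZMod (p^e) × ZMod (p^e) => (z.1 - q * z.2, z.2),
       fun z => by simp, fun z => by simp⟩ fun z => ?_
    simp only [Equiv.coe_fn_mk]
    constructor <;> rintro ⟨h1, h2⟩
    · exact ⟨by linear_combination h1, by linear_combination h2⟩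
    · exact ⟨by linear_combination h1, by linear_combination h2⟩
  have L3 : Nat.card {xy : ZMod (p^e) × ZMod (p^e) //
        a * xy.1 + 0 * xy.2 = 0 ∧ 0 * xy.1 + (d - r * (a * q)) * xy.2 = 0}
      = Nat.gcd a.val (p^e) * Nat.gcd (d - r * (a * q)).val (p^e) := by
    have heq : {xy : ZMod (p^e) × ZMod (p^e) //
        a * xy.1 + 0 * xy.2 = 0 ∧ 0 * xy.1 + (d - r * (a * q)) * xy.2 = 0}
        ≃ {x : ZMod (p^e) // a * x = 0} × {y : ZMod (p^e) // (d - r * (a * q)) * y = 0} := by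
      refine (Equiv.subtypeEquivRight fun z => ?_).trans (Equiv.subtypeProdEquivProd)
      constructor <;> rintro ⟨h1, h2⟩ <;>
        exact ⟨by linear_combination h1, by linear_combination h2⟩
    rw [Nat.card_congr heq, Nat.card_prod, count_lin (p^e) (NeZero.ne (p^e)), count_lin (p^e) (NeZero.ne (p^e))]
  rw [L1, L2, L3]
  -- RHS chain
  have hcast : ∀ x : ZMod (p^e), (((x.val : ℤ)) : ZMod (p^e)) = x := fun x => by
    push_cast
    exact ZMod.natCast_rightInverse x
  have R1 : Gz (p^e) (a.val : ℤ) ((a*q).val : ℤ) ((a*r).val : ℤ) (d.val : ℤ)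
      = Gz (p^e) (a.val : ℤ) ((a*q).val : ℤ) 0 (((d - r * (a * q)).val : ℤ)) := by
    rw [← Gz_rowop (p^e) (a.val:ℤ) ((a*q).val:ℤ) ((a*r).val:ℤ) (d.val:ℤ) (r.val:ℤ)]
    symm
    apply Gz_congr
    · simp
    · simp
    · have h := val_int_congr (a*r) ((r.val:ℤ) * (a.val:ℤ)) (by push_cast [hcast]; ring)
      rw [show (0:ℤ) - (((a*r).val:ℤ) - (r.val:ℤ)*(a.val:ℤ))
          = -(((a*r).val:ℤ) - (r.val:ℤ)*(a.val:ℤ)) by ring]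
      exact dvd_neg.2 h
    · exact val_int_congr (d - r * (a*q)) ((d.val:ℤ) - (r.val:ℤ)*((a*q).val:ℤ))
        (by push_cast [hcast]; ring)
  have R2 : Gz (p^e) (a.val : ℤ) ((a*q).val : ℤ) 0 (((d - r * (a * q)).val : ℤ))
      = Gz (p^e) (a.val : ℤ) 0 0 (((d - r * (a * q)).val : ℤ)) := by
    rw [← Gz_colop (p^e) (a.val:ℤ) ((a*q).val:ℤ) 0 (((d - r * (a*q)).val : ℤ)) (q.val:ℤ)]
    symm
    apply Gz_congr
    · simp
    · have h := val_int_congr (a*q) ((q.val:ℤ) * (a.val:ℤ)) (by push_cast [hcast]; ring)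
      rw [show (0:ℤ) - (((a*q).val:ℤ) - (q.val:ℤ)*(a.val:ℤ))
          = -(((a*q).val:ℤ) - (q.val:ℤ)*(a.val:ℤ)) by ring]
      exact dvd_neg.2 h
    · simp
    · simp
  rw [R1, R2, Gz_diag (p^e) a.val (d - r * (a * q)).val,
    diag_gcd p hp e a.val (d - r * (a * q)).val]

theorem stmt0 (p : ℕ) (hp : p.Prime) (e : ℕ) (he : 0 < e) (a b c d : ZMod (p^e)) :
    Nat.card {xy : ZMod (p^e) × ZMod (p^e) //
        a * xy.1 + b * xy.2 = 0 ∧ c * xy.1 + d * xy.2 = 0}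
      = Int.gcd ((a.val : ℤ) * (d.val : ℤ) - (b.val : ℤ) * (c.val : ℤ))
          ((p : ℤ)^e * (Nat.gcd a.val (Nat.gcd b.val (Nat.gcd c.val (Nat.gcd d.val (p^e)))) : ℤ)) := by
  haveI : NeZero (p^e) := ⟨pow_ne_zero e hp.pos.ne'⟩
  have hGz : Int.gcd ((a.val : ℤ) * (d.val : ℤ) - (b.val : ℤ) * (c.val : ℤ))
          ((p : ℤ)^e * (Nat.gcd a.val (Nat.gcd b.val (Nat.gcd c.val (Nat.gcd d.val (p^e)))) : ℤ))
      = Gz (p^e) (a.val : ℤ) (b.val : ℤ) (c.val : ℤ) (d.val : ℤ) := by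
    rw [Gz_val]
    congr 1
  rw [hGz]
  rcases zmod_dvd_total hp a b with h1 | h1
  · rcases zmod_dvd_total hp a c with h2 | h2
    · rcases zmod_dvd_total hp a d with h3 | h3
      · exact core_lemma p e hp a b c d h1 h2 h3
      · rw [lhs_rowswap, lhs_colswap, ← Gz_rowswap, ← Gz_colswap]
        exact core_lemma p e hp d c b a (h3.trans h2) (h3.trans h1) h3
    · rcases zmod_dvd_total hp c d with h3 | h3
      · rw [lhs_rowswap, ← Gz_rowswap]
        exact core_lemma p e hp c d a b h3 h2 (h2.trans h1)
      · rw [lhs_rowswap, lhs_colswap, ← Gz_rowswap, ← Gz_colswap]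
        exact core_lemma p e hp d c b a h3 ((h3.trans h2).trans h1) (h3.trans h2)
  · rcases zmod_dvd_total hp b c with h2 | h2
    · rcases zmod_dvd_total hp b d with h3 | h3
      · rw [lhs_colswap, ← Gz_colswap]
        exact core_lemma p e hp b a d c h1 h3 h2
      · rw [lhs_rowswap, lhs_colswap, ← Gz_rowswap, ← Gz_colswap]
        exact core_lemma p e hp d c b a (h3.trans h2) h3 (h3.trans h1)
    · rcases zmod_dvd_total hp c d with h3 | h3
      · rw [lhs_rowswap, ← Gz_rowswap]
        exact core_lemma p e hp c d a b h3 (h2.trans h1) h2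
      · rw [lhs_rowswap, lhs_colswap, ← Gz_rowswap, ← Gz_colswap]
        exact core_lemma p e hp d c b a h3 (h3.trans h2) ((h3.trans h2).trans h1)
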